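/- For γ = (-a₁, -a₂, b₁-1, 0) ∈ Z^4 and B = Z·(-1,-1,1,1) ⊂ Z^4, the Γ-series F_γ(z₁,z₂,z₃,z₄) = Σ_{n ∈ Z} z^{γ + n(-1,-1,1,1)}/(γ + n(-1,-1,1,1))! equals c · z₁^{-a₁} z₂^{-a₂} z₃^{b₁-1} · Σ_{n ≥ 0} [(a₁)_n (a₂)_n / ((b₁)_n n!)] (z₃z₄/(z₁z₂))^n with c = 1/(Γ(1-a₁)Γ(1-a₂)Γ(b₁)), whenever the parameters are such that both sides are finite sums (e.g. a₁, a₂ nonpositive integers, b₁ a positive integer). -/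

import Mathlib

/-- For `γ = (-a₁, -a₂, b₁-1, 0)` and `B = ℤ·(-1,-1,1,1)`, the Γ-series
`F_γ(z) = Σ_n z^{γ + n(-1,-1,1,1)}/(γ + n(-1,-1,1,1))!` equals
`c · z₁^{-a₁} z₂^{-a₂} z₃^{b₁-1} · F_{2,1}(a₁,a₂,b₁; z₃z₄/(z₁z₂))` with
`c = 1/(Γ(1-a₁)Γ(1-a₂)Γ(b₁))`, when `a₁, a₂` are nonpositive integers and `b₁` is a
positive integer (so that both sides are finite sums; the nonzero terms of either sum
have index `0 ≤ n ≤ min(-a₁, -a₂)`). -/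
theorem stmt_11 (a₁ a₂ b₁ : ℤ) (ha₁ : a₁ ≤ 0) (ha₂ : a₂ ≤ 0) (hb₁ : 1 ≤ b₁)
    (z : Fin 4 → ℂ) (hz : ∀ i, z i ≠ 0) :
    ∑ n ∈ Finset.range (min (-a₁).toNat (-a₂).toNat + 1),
        z 0 ^ (-a₁ - (n : ℤ)) * z 1 ^ (-a₂ - (n : ℤ)) * z 2 ^ (b₁ - 1 + (n : ℤ)) *
            z 3 ^ (n : ℕ) /
          (((-a₁ - (n : ℤ)).toNat.factorial * (-a₂ - (n : ℤ)).toNat.factorial *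
              (b₁ - 1 + (n : ℤ)).toNat.factorial * n.factorial : ℕ) : ℂ) =
      (((-a₁).toNat.factorial * (-a₂).toNat.factorial * (b₁ - 1).toNat.factorial : ℕ) : ℂ)⁻¹ *
        (z 0 ^ (-a₁) * z 1 ^ (-a₂) * z 2 ^ (b₁ - 1)) *
        ∑ n ∈ Finset.range (min (-a₁).toNat (-a₂).toNat + 1),
          (((ascPochhammer ℤ n).eval a₁ * (ascPochhammer ℤ n).eval a₂ : ℤ) : ℂ) /
              ((((ascPochhammer ℤ n).eval b₁ : ℤ) : ℂ) * (n.factorial : ℕ)) *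
            (z 2 * z 3 / (z 0 * z 1)) ^ n := by
  obtain ⟨A, hA⟩ : ∃ A : ℕ, a₁ = -(A : ℤ) := ⟨(-a₁).toNat, by omega⟩
  obtain ⟨B, hB⟩ : ∃ B : ℕ, a₂ = -(B : ℤ) := ⟨(-a₂).toNat, by omega⟩
  obtain ⟨C, hC⟩ : ∃ C : ℕ, b₁ = (C : ℤ) + 1 := ⟨(b₁ - 1).toNat, by omega⟩
  subst hA hB hC
  simp only [neg_neg, Int.toNat_natCast, add_sub_cancel_right]
  rw [Finset.mul_sum]
  refine Finset.sum_congr rfl fun n hn => ?_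
  simp only [Finset.mem_range] at hn
  have hnA : n ≤ A := by omega
  have hnB : n ≤ B := by omega
  -- pochhammer evaluations
  have e1 : (ascPochhammer ℤ n).eval (-(A : ℤ)) = (-1) ^ n * (A.descFactorial n : ℤ) := by
    rw [ascPochhammer_eval_neg_eq_descPochhammer, descPochhammer_eval_eq_descFactorial]
  have e2 : (ascPochhammer ℤ n).eval (-(B : ℤ)) = (-1) ^ n * (B.descFactorial n : ℤ) := by
    rw [ascPochhammer_eval_neg_eq_descPochhammer, descPochhammer_eval_eq_descFactorial]
  have e3 : (ascPochhammer ℤ n).eval ((C : ℤ) + 1) = ((C + 1).ascFactorial n : ℤ) := by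
    rw [Nat.cast_ascFactorial]; push_cast; ring_nf
  -- exponent rewrites
  have p0 : z 0 ^ ((A : ℤ) - (n : ℤ)) = z 0 ^ (A - n) := by
    rw [show ((A : ℤ) - (n : ℤ)) = ((A - n : ℕ) : ℤ) by omega, zpow_natCast]
  have p1 : z 1 ^ ((B : ℤ) - (n : ℤ)) = z 1 ^ (B - n) := by
    rw [show ((B : ℤ) - (n : ℤ)) = ((B - n : ℕ) : ℤ) by omega, zpow_natCast]
  have p2 : z 2 ^ ((C : ℤ) + (n : ℤ)) = z 2 ^ (C + n) := by
    rw [show ((C : ℤ) + (n : ℤ)) = ((C + n : ℕ) : ℤ) by omega, zpow_natCast]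
  have p0' : z 0 ^ ((A : ℤ)) = z 0 ^ (A : ℕ) := zpow_natCast _ _
  have p1' : z 1 ^ ((B : ℤ)) = z 1 ^ (B : ℕ) := zpow_natCast _ _
  have p2' : z 2 ^ ((C : ℤ)) = z 2 ^ (C : ℕ) := zpow_natCast _ _
  have t0 : ((A : ℤ) - (n : ℤ)).toNat = A - n := by omega
  have t1 : ((B : ℤ) - (n : ℤ)).toNat = B - n := by omega
  have t2 : ((C : ℤ) + (n : ℤ)).toNat = C + n := by omega
  have e12 : (ascPochhammer ℤ n).eval (-(A : ℤ)) * (ascPochhammer ℤ n).eval (-(B : ℤ)) =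
      ((A.descFactorial n * B.descFactorial n : ℕ) : ℤ) := by
    rw [e1, e2, mul_mul_mul_comm, ← mul_pow]; push_cast; norm_num
  rw [p0, p1, p2, p0', p1', p2', t0, t1, t2, e12, e3]
  -- factorial identities in ℂ
  have fA : ((A - n).factorial : ℂ) * (A.descFactorial n : ℂ) = (A.factorial : ℂ) := by
    exact_mod_cast congrArg (Nat.cast : ℕ → ℂ) (Nat.factorial_mul_descFactorial hnA)
  have fB : ((B - n).factorial : ℂ) * (B.descFactorial n : ℂ) = (B.factorial : ℂ) := by
    exact_mod_cast congrArg (Nat.cast : ℕ → ℂ) (Nat.factorial_mul_descFactorial hnB)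
  have fC : ((C).factorial : ℂ) * ((C + 1).ascFactorial n : ℂ) = ((C + n).factorial : ℂ) := by
    exact_mod_cast congrArg (Nat.cast : ℕ → ℂ) (Nat.factorial_mul_ascFactorial C n)
  -- power splits
  have q0 : z 0 ^ A = z 0 ^ (A - n) * z 0 ^ n := by rw [← pow_add]; congr 1; omega
  have q1 : z 1 ^ B = z 1 ^ (B - n) * z 1 ^ n := by rw [← pow_add]; congr 1; omega
  have q2 : z 2 ^ (C + n) = z 2 ^ C * z 2 ^ n := by rw [pow_add]
  have nz : ∀ m : ℕ, (m.factorial : ℂ) ≠ 0 := fun m => Nat.cast_ne_zero.mpr m.factorial_ne_zero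
  have dA : (A.descFactorial n : ℂ) ≠ 0 := by
    exact_mod_cast Nat.cast_ne_zero.mpr (by simpa [Nat.descFactorial_eq_zero_iff_lt] using not_lt.mpr hnA)
  have dB : (B.descFactorial n : ℂ) ≠ 0 := by
    exact_mod_cast Nat.cast_ne_zero.mpr (by simpa [Nat.descFactorial_eq_zero_iff_lt] using not_lt.mpr hnB)
  have aC : ((C + 1).ascFactorial n : ℂ) ≠ 0 :=
    Nat.cast_ne_zero.mpr (Nat.ascFactorial_pos C n).ne'
  have hz0 := hz 0; have hz1 := hz 1; have hz2 := hz 2; have hz3 := hz 3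
  have hp0 : z 0 ^ n ≠ 0 := pow_ne_zero _ hz0
  have hp1 : z 1 ^ n ≠ 0 := pow_ne_zero _ hz1
  rw [q0, q1, q2, div_pow, mul_pow, mul_pow]
  push_cast
  field_simp [hp0, hp1]
  rw [div_eq_div_iff
      (mul_ne_zero (mul_ne_zero (mul_ne_zero (nz _) (nz _)) (nz _)) (nz _))
      (mul_ne_zero (mul_ne_zero (mul_ne_zero (nz _) (nz _)) (nz _)) (nz _)), ← fA, ← fB,
    show ((C + n).factorial : ℂ) = (C.factorial : ℂ) * ((C + 1).ascFactorial n : ℂ) from fC.symm]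
  ring
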